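/- Let A = [[a,b],[c,d]] ∈ ℝ^{2×2} satisfy det A = ad − bc = 0 and a, d > max{0, b, c}, and set ρ₁ = (d−c)/(a−b), ρ₂ = (d−b)/(a−c). Let y = (y₁, y₂) ∈ ℝ² × ℝ² satisfy y₁₂ = −ρ₁·y₁₁ and y₂₂ = −ρ₂·y₂₁, and set z = (y₁₁, y₂₁) ∈ ℝ². Then Ψ(y) = ψ(z), where Ψ is the energy on ℝ⁴ and ψ is the subspace energy on ℝ². -/

import Mathlib

open Matrix

/-- The open quadrants `P₁, P₂, P₃, P₄` (0-indexed: `Pset 0 = P₁`, …, `Pset 3 = P₄`). -/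
def Pset : Fin 4 → Set (ℝ × ℝ) :=
  ![{z | z.1 < 0 ∧ z.2 < 0}, {z | z.1 < 0 ∧ 0 < z.2},
    {z | 0 < z.1 ∧ 0 < z.2}, {z | 0 < z.1 ∧ z.2 < 0}]

/-- The boundary rays: `Pbd i = P_{i∼(i+1)}` (0-indexed: `Pbd 0 = P₁∼₂`, `Pbd 1 = P₂∼₃`,
`Pbd 2 = P₃∼₄`, `Pbd 3 = P₄∼₁`). -/
def Pbd : Fin 4 → Set (ℝ × ℝ) :=
  ![{z | z.1 < 0 ∧ z.2 = 0}, {z | z.1 = 0 ∧ 0 < z.2},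
    {z | 0 < z.1 ∧ z.2 = 0}, {z | z.1 = 0 ∧ z.2 < 0}]

/-- `P̂ᵢ = Pᵢ ∪ Pᵢ∼ᵢ₊₁`. -/
def Phat (i : Fin 4) : Set (ℝ × ℝ) := Pset i ∪ Pbd i

/-- The subspace energy `ψ`: `ψ((0,0)) = 0`, `ψ(z) = −ρ₁z₁ − ρ₂z₂` on `P̂₁`,
`−ρ₁z₁ + z₂` on `P̂₂`, `z₁ + z₂` on `P̂₃`, `z₁ − ρ₂z₂` on `P̂₄`
(note `P̂₁ = {z₁<0, z₂≤0}`, `P̂₂ = {z₁≤0, z₂>0}`, `P̂₃ = {z₁>0, z₂≥0}`,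
`P̂₄ = {z₁≥0, z₂<0}`). -/
noncomputable def psi (ρ₁ ρ₂ : ℝ) (z : ℝ × ℝ) : ℝ :=
  if z.1 < 0 ∧ z.2 ≤ 0 then -ρ₁ * z.1 - ρ₂ * z.2
  else if z.1 ≤ 0 ∧ 0 < z.2 then -ρ₁ * z.1 + z.2
  else if 0 < z.1 ∧ 0 ≤ z.2 then z.1 + z.2
  else if 0 ≤ z.1 ∧ z.2 < 0 then z.1 - ρ₂ * z.2
  else 0

/-- The columns of `S = [[b, a, a, b], [−c, −c, −a, −a]]`. -/
def Scol (a b c : ℝ) : Fin 4 → ℝ × ℝ :=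
  ![(b, -c), (a, -c), (a, -a), (b, -a)]

/-- The threshold `B = min{ β ≥ 0 : ψ(z) ≤ β for all z with ‖z‖₁ ≤ 6·a_max }`. -/
noncomputable def Bconst (ρ₁ ρ₂ amax : ℝ) : ℝ :=
  sInf {β : ℝ | 0 ≤ β ∧ ∀ z : ℝ × ℝ, |z.1| + |z.2| ≤ 6 * amax → psi ρ₁ ρ₂ z ≤ β}

/-- A choice map `Q` (encoding the argmax with arbitrary tiebreaking):
`Q((0,0)) = e₁`, `Q(z) = eᵢ` on `Pᵢ`, and `Q(z) ∈ {eᵢ, eᵢ₊₁}` on `Pᵢ∼ᵢ₊₁`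
(we record the index of the chosen standard basis vector, 0-indexed). -/
def IsChoiceMap (Q : ℝ × ℝ → Fin 4) : Prop :=
  Q (0, 0) = 0 ∧
  (∀ i : Fin 4, ∀ z ∈ Pset i, Q z = i) ∧
  (∀ i : Fin 4, ∀ z ∈ Pbd i, Q z = i ∨ Q z = i + 1)

/-- The energy function `Ψ(y₁, y₂) = max_{(x₁,x₂) ∈ Δ₂ × Δ₂} (⟨x₁,y₁⟩ + ⟨x₂,y₂⟩)` on ℝ⁴. -/
noncomputable def energy (y₁ y₂ : Fin 2 → ℝ) : ℝ :=
  ⨆ p : ↥(stdSimplex ℝ (Fin 2)) × ↥(stdSimplex ℝ (Fin 2)),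
    (p.1 : Fin 2 → ℝ) ⬝ᵥ y₁ + (p.2 : Fin 2 → ℝ) ⬝ᵥ y₂

lemma mem_simplex_ind (i : Fin 2) :
    (fun j => if j = i then (1:ℝ) else 0) ∈ stdSimplex ℝ (Fin 2) := by
  constructor
  · intro j; dsimp only; split <;> norm_num
  · fin_cases i <;> simp [Fin.sum_univ_two]

lemma ind_dot (i : Fin 2) (y : Fin 2 → ℝ) :
    (fun j => if j = i then (1:ℝ) else 0) ⬝ᵥ y = y i := by
  fin_cases i <;> simp [dotProduct, Fin.sum_univ_two]

lemma dot_le_max (x y : Fin 2 → ℝ) (hx : x ∈ stdSimplex ℝ (Fin 2)) :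
    x ⬝ᵥ y ≤ max (y 0) (y 1) := by
  have h0 := hx.1 0
  have h1 := hx.1 1
  have hs : x 0 + x 1 = 1 := by simpa [Fin.sum_univ_two] using hx.2
  have hm0 : y 0 ≤ max (y 0) (y 1) := le_max_left _ _
  have hm1 : y 1 ≤ max (y 0) (y 1) := le_max_right _ _
  calc x ⬝ᵥ y = x 0 * y 0 + x 1 * y 1 := by simp [dotProduct, Fin.sum_univ_two]
    _ ≤ x 0 * max (y 0) (y 1) + x 1 * max (y 0) (y 1) := by
        have := mul_le_mul_of_nonneg_left hm0 h0
        have := mul_le_mul_of_nonneg_left hm1 h1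
        linarith
    _ = max (y 0) (y 1) := by rw [← add_mul, hs, one_mul]

lemma energy_eq_max (y₁ y₂ : Fin 2 → ℝ) :
    energy y₁ y₂ = max (y₁ 0) (y₁ 1) + max (y₂ 0) (y₂ 1) := by
  haveI : Nonempty ↥(stdSimplex ℝ (Fin 2)) := ⟨⟨_, mem_simplex_ind 0⟩⟩
  have hb : BddAbove (Set.range fun p : ↥(stdSimplex ℝ (Fin 2)) × ↥(stdSimplex ℝ (Fin 2)) =>
      (p.1 : Fin 2 → ℝ) ⬝ᵥ y₁ + (p.2 : Fin 2 → ℝ) ⬝ᵥ y₂) := by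
    refine ⟨max (y₁ 0) (y₁ 1) + max (y₂ 0) (y₂ 1), ?_⟩
    rintro _ ⟨p, rfl⟩
    exact add_le_add (dot_le_max _ _ p.1.2) (dot_le_max _ _ p.2.2)
  apply le_antisymm
  · exact ciSup_le fun p => add_le_add (dot_le_max _ _ p.1.2) (dot_le_max _ _ p.2.2)
  · obtain ⟨i₁, hi₁⟩ : ∃ i, max (y₁ 0) (y₁ 1) = y₁ i := by
      rcases max_cases (y₁ 0) (y₁ 1) with ⟨h, _⟩ | ⟨h, _⟩
      exacts [⟨0, h⟩, ⟨1, h⟩]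
    obtain ⟨i₂, hi₂⟩ : ∃ i, max (y₂ 0) (y₂ 1) = y₂ i := by
      rcases max_cases (y₂ 0) (y₂ 1) with ⟨h, _⟩ | ⟨h, _⟩
      exacts [⟨0, h⟩, ⟨1, h⟩]
    rw [hi₁, hi₂]
    have h := le_ciSup hb (⟨⟨_, mem_simplex_ind i₁⟩, ⟨_, mem_simplex_ind i₂⟩⟩ :
      ↥(stdSimplex ℝ (Fin 2)) × ↥(stdSimplex ℝ (Fin 2)))
    simp only [ind_dot] at h
    rw [← ind_dot i₁ y₁, ← ind_dot i₂ y₂]; exact h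

/-- if `y = (y₁, y₂) ∈ ℝ² × ℝ²` satisfies the subspace relations
`y₁₂ = −ρ₁·y₁₁` and `y₂₂ = −ρ₂·y₂₁`, then `Ψ(y) = ψ(z)` for `z = (y₁₁, y₂₁)`. -/
theorem energy_eq_subspace_energy
    (a b c d : ℝ)
    (hdet : a * d - b * c = 0)
    (ha : a > max 0 (max b c)) (hd : d > max 0 (max b c))
    (ρ₁ ρ₂ : ℝ)
    (hρ₁ : ρ₁ = (d - c) / (a - b)) (hρ₂ : ρ₂ = (d - b) / (a - c))
    (y₁ y₂ : Fin 2 → ℝ)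
    (h₁ : y₁ 1 = -ρ₁ * y₁ 0) (h₂ : y₂ 1 = -ρ₂ * y₂ 0) :
    energy y₁ y₂ = psi ρ₁ ρ₂ (y₁ 0, y₂ 0) := by
  have hmb := le_max_left b c
  have hmc := le_max_right b c
  have hm := le_max_right 0 (max b c)
  have hba : b < a := lt_of_le_of_lt (hmb.trans hm) ha
  have hca : c < a := lt_of_le_of_lt (hmc.trans hm) ha
  have hcd : c < d := lt_of_le_of_lt (hmc.trans hm) hd
  have hbd : b < d := lt_of_le_of_lt (hmb.trans hm) hd
  have hρ1 : 0 < ρ₁ := by rw [hρ₁]; apply div_pos <;> linarith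
  have hρ2 : 0 < ρ₂ := by rw [hρ₂]; apply div_pos <;> linarith
  have Hmax : ∀ ρ u : ℝ, 0 < ρ → max u (-ρ * u) = if u ≤ 0 then -ρ * u else u := by
    intro ρ u hρ
    split <;> rename_i h
    · exact max_eq_right (by nlinarith)
    · exact max_eq_left (by nlinarith [le_of_not_ge h])
  rw [energy_eq_max, h₁, h₂, Hmax _ _ hρ1, Hmax _ _ hρ2]
  set t := y₁ 0
  set s := y₂ 0
  clear_value t s
  clear h₁ h₂ hdet hρ₁ hρ₂ ha hd hmb hmc hm
  unfold psi
  rcases lt_trichotomy t 0 with ht | ht | ht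
  · rcases lt_trichotomy s 0 with hs | hs | hs
    · simp [ht, hs, ht.le, hs.le, not_le.mpr ht, not_le.mpr hs]; ring
    · subst hs
      simp [ht, ht.le, not_le.mpr ht]
    · simp [ht, hs, ht.le, hs.le.not_gt, not_le.mpr hs, ht.asymm]
  · subst ht
    rcases lt_trichotomy s 0 with hs | hs | hs
    · simp [hs, hs.le, not_le.mpr hs, hs.asymm]
    · subst hs; simp
    · simp [hs, hs.le, not_le.mpr hs, hs.asymm]
  · rcases lt_trichotomy s 0 with hs | hs | hs
    · simp [ht, hs, ht.le, hs.le, not_le.mpr ht, not_le.mpr hs, ht.asymm, hs.asymm,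
        ht.le.not_gt]
      ring
    · subst hs
      simp [ht, ht.le, not_le.mpr ht, ht.asymm, ht.le.not_gt]
    · simp [ht, hs, ht.le, hs.le, not_le.mpr ht, not_le.mpr hs, ht.le.not_gt, hs.le.not_gt]
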